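/- Let A be a local integral domain with fraction field K, and let p be a prime ideal of A such that A is straight at p. Then A is integrally closed in the CPI-extension A + pA_p, i.e. every element of the subring A + pA_p of K that is integral over A lies in A. -/

import Mathlib

/-- The subset `p·A_m = {x/y : x ∈ p, y ∈ A \ m}` of the ambient field `F`. -/
def locSet {F : Type*} [Field F] (A : Subring F) (p m : Ideal A) : Set F :=
  {z | ∃ x : ↥A, x ∈ p ∧ ∃ y : ↥A, y ∉ m ∧ z = (x : F) / (y : F)}

/-- `A` is straight at the prime ideal `p`: for every overring `B` of `A`
(subring of the fraction field `F` of `A` containing `A`), the `A/p`-module `B/pB`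
is torsion-free, stated elementwise: for `a ∈ A \ p` and `b ∈ B`,
if `a·b ∈ pB` then `b ∈ pB`. -/
def IsStraightAt {F : Type*} [Field F] (A : Subring F) (p : Ideal A) : Prop :=
  ∀ (B : Subring F) (hAB : A ≤ B), ∀ a : ↥A, a ∉ p → ∀ b : ↥B,
    Subring.inclusion hAB a * b ∈ p.map (Subring.inclusion hAB) →
    b ∈ p.map (Subring.inclusion hAB)

/-- `p` is a locally divided prime ideal of `A`: `p·A_m = p·A_p` (as subsets of the
fraction field) for every maximal ideal `m` containing `p`. -/
def IsLocallyDividedAt {F : Type*} [Field F] (A : Subring F) (p : Ideal A) : Prop :=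
  ∀ m : Ideal A, m.IsMaximal → p ≤ m → locSet A p m = locSet A p p

/-- The localization `A_m` of `A` at the prime ideal `m`, realized as the subring
`{x/y : x ∈ A, y ∈ A \ m}` of the fraction field of `A`. -/
def locSubring {F : Type*} [Field F] (A : Subring F) (m : Ideal A) (hm : m.IsPrime) :
    Subring F where
  carrier := {z | ∃ x y : ↥A, y ∉ m ∧ z = (x : F) / (y : F)}
  zero_mem' := ⟨0, 1, fun h => hm.ne_top (m.eq_top_of_isUnit_mem h isUnit_one), by simp⟩
  one_mem' := ⟨1, 1, fun h => hm.ne_top (m.eq_top_of_isUnit_mem h isUnit_one), by simp⟩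
  add_mem' := by
    rintro a b ⟨x1, y1, hy1, rfl⟩ ⟨x2, y2, hy2, rfl⟩
    refine ⟨x1 * y2 + x2 * y1, y1 * y2, fun h => (hm.mem_or_mem h).elim hy1 hy2, ?_⟩
    have h1 : (y1 : F) ≠ 0 := fun h =>
      hy1 (by rw [show y1 = 0 from Subtype.ext h]; exact m.zero_mem)
    have h2 : (y2 : F) ≠ 0 := fun h =>
      hy2 (by rw [show y2 = 0 from Subtype.ext h]; exact m.zero_mem)
    push_cast
    field_simp
  mul_mem' := by
    rintro a b ⟨x1, y1, hy1, rfl⟩ ⟨x2, y2, hy2, rfl⟩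
    refine ⟨x1 * x2, y1 * y2, fun h => (hm.mem_or_mem h).elim hy1 hy2, ?_⟩
    push_cast
    rw [div_mul_div_comm]
  neg_mem' := by
    rintro a ⟨x, y, hy, rfl⟩
    exact ⟨-x, y, hy, by push_cast; rw [neg_div]⟩

/-- Let `A` be a local domain with fraction field `K`, straight at the prime ideal `p`.
Then `A` is integrally closed in the CPI-extension `A + p·A_p`: every element of `K` of
the form `a + t` with `a ∈ A`, `t ∈ p·A_p` that is integral over `A` lies in `A`. -/
theorem stmt2 {K : Type*} [Field K] (A : Subring K) [IsLocalRing ↥A] [IsFractionRing ↥A K]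
    (p : Ideal A) [p.IsPrime] (hst : IsStraightAt A p)
    (z : K) (hz : ∃ a : ↥A, ∃ t ∈ locSet A p p, z = (a : K) + t)
    (hint : IsIntegral ↥A z) :
    z ∈ A := by
  obtain ⟨a, t, ht, rfl⟩ := hz
  have hintt : IsIntegral ↥A t := by
    have ha : IsIntegral ↥A ((a : K)) := isIntegral_algebraMap
    simpa using hint.sub ha
  suffices h : t ∈ A from A.add_mem a.2 h
  obtain ⟨x, hx, y, hy, rfl⟩ := ht
  set t : K := (x : K) / (y : K) with htdef
  have hy0 : (y : K) ≠ 0 := by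
    intro h
    exact hy (by rw [show y = 0 from Subtype.ext h]; exact p.zero_mem)
  set S := Algebra.adjoin ↥A {t} with hSdef
  have htS : t ∈ S := Algebra.subset_adjoin rfl
  have hAB : A ≤ S.toSubring := by
    intro k hk
    exact Subalgebra.mem_toSubring.2 (S.algebraMap_mem ⟨k, hk⟩)
  have htB : t ∈ S.toSubring := Subalgebra.mem_toSubring.2 htS
  -- straightness gives t ∈ pB
  have key : (⟨t, htB⟩ : ↥S.toSubring) ∈ p.map (Subring.inclusion hAB) := by
    apply hst S.toSubring hAB y hy
    have heq : Subring.inclusion hAB y * (⟨t, htB⟩ : ↥S.toSubring)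
        = Subring.inclusion hAB x := by
      ext
      show (y : K) * t = (x : K)
      rw [htdef]
      field_simp
    rw [heq]
    exact Ideal.mem_map_of_mem _ hx
  set N : Submodule ↥A K := Subalgebra.toSubmodule S with hNdef
  have hmul : ∀ s ∈ S, ∀ u ∈ p • N, s * u ∈ p • N := by
    intro s hs u hu
    refine Submodule.smul_induction_on hu ?_ ?_
    · intro c hc n hn
      rw [mul_smul_comm]
      exact Submodule.smul_mem_smul hc (S.mul_mem hs hn)
    · intro u1 u2 h1 h2
      rw [mul_add]; exact Submodule.add_mem _ h1 h2
  -- t ∈ p • N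
  have htpN : t ∈ p • N := by
    let I : Ideal ↥S.toSubring :=
      { carrier := {b | (b : K) ∈ p • N}
        add_mem' := fun {b1 b2} h1 h2 => by
          show ((b1 + b2 : ↥S.toSubring) : K) ∈ p • N
          push_cast
          exact Submodule.add_mem _ h1 h2
        zero_mem' := by
          show ((0 : ↥S.toSubring) : K) ∈ p • N
          push_cast
          exact Submodule.zero_mem _
        smul_mem' := fun c b hb => by
          show ((c * b : ↥S.toSubring) : K) ∈ p • N
          push_cast
          exact hmul _ (Subalgebra.mem_toSubring.1 c.2) _ hb }
    have hle : p.map (Subring.inclusion hAB) ≤ I := by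
      rw [Ideal.map_le_iff_le_comap]
      intro c hc
      show ((Subring.inclusion hAB c : ↥S.toSubring) : K) ∈ p • N
      have : ((Subring.inclusion hAB c : ↥S.toSubring) : K) = c • (1 : K) := by
        rw [Algebra.smul_def, mul_one]
        rfl
      rw [this]
      exact Submodule.smul_mem_smul hc (S.one_mem)
    exact hle key
  -- N ≤ span {1} ⊔ p • N
  have hsub : N ≤ Submodule.span ↥A {(1 : K)} ⊔ p • N := by
    intro s hs
    rw [hNdef, Subalgebra.mem_toSubmodule] at hs
    have hP : ∃ b : ↥A, s - (b : K) ∈ p • N := by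
      induction hs using Algebra.adjoin_induction with
      | mem w hw =>
        refine ⟨0, ?_⟩
        rcases hw with rfl
        simpa using htpN
      | algebraMap r =>
        exact ⟨r, by
          rw [show (algebraMap ↥A K r : K) = (r : K) from rfl, sub_self]
          exact Submodule.zero_mem _⟩
      | add w v hw hv ihw ihv =>
        obtain ⟨b1, h1⟩ := ihw
        obtain ⟨b2, h2⟩ := ihv
        refine ⟨b1 + b2, ?_⟩
        have : w + v - ((b1 + b2 : ↥A) : K) = (w - b1) + (v - b2) := by push_cast; ring
        rw [this]
        exact Submodule.add_mem _ h1 h2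
      | mul w v hw hv ihw ihv =>
        obtain ⟨b1, h1⟩ := ihw
        obtain ⟨b2, h2⟩ := ihv
        refine ⟨b1 * b2, ?_⟩
        have hexp : w * v - ((b1 * b2 : ↥A) : K)
            = (b1 : K) * (v - b2) + (b2 : K) * (w - b1) + (w - b1) * (v - b2) := by
          push_cast; ring
        rw [hexp]
        have hwN : w - (b1 : K) ∈ S := by
          have : w - (b1 : K) ∈ N := Submodule.smul_le_right h1
          rwa [hNdef, Subalgebra.mem_toSubmodule] at this
        have m1 : (b1 : K) * (v - b2) ∈ p • N := by
          have := Submodule.smul_mem (p • N) b1 h2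
          rwa [Algebra.smul_def b1 (v - (b2 : K))] at this
        have m2 : (b2 : K) * (w - b1) ∈ p • N := by
          have := Submodule.smul_mem (p • N) b2 h1
          rwa [Algebra.smul_def b2 (w - (b1 : K))] at this
        exact Submodule.add_mem _ (Submodule.add_mem _ m1 m2) (hmul _ hwN _ h2)
    obtain ⟨b, hb⟩ := hP
    have : s = (b : K) + (s - (b : K)) := by ring
    rw [this]
    refine Submodule.add_mem_sup ?_ hb
    refine Submodule.mem_span_singleton.2 ⟨b, ?_⟩
    rw [Algebra.smul_def, mul_one]
    rfl
  have hple : p ≤ Ideal.jacobson ⊥ := by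
    rw [IsLocalRing.jacobson_eq_maximalIdeal ⊥ bot_ne_top]
    exact IsLocalRing.le_maximalIdeal (Ideal.IsPrime.ne_top ‹p.IsPrime›)
  have hNfg : N.FG := hintt.fg_adjoin_singleton
  have hNle : N ≤ Submodule.span ↥A {(1 : K)} :=
    Submodule.le_of_le_smul_of_le_jacobson_bot hNfg hple hsub
  have : t ∈ Submodule.span ↥A {(1 : K)} :=
    hNle ((Subalgebra.mem_toSubmodule S).2 htS)
  obtain ⟨b, hb⟩ := Submodule.mem_span_singleton.1 this
  rw [Algebra.smul_def, mul_one] at hb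
  rw [← hb]
  show (algebraMap ↥A K b : K) ∈ A
  have : (algebraMap ↥A K b : K) = (b : K) := rfl
  rw [this]
  exact b.2
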